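/- Let S be a finite index set with |S| = ℓ where ℓ ≥ d, let {v_i : i ∈ S} be vectors in ℝ^d with A = Σ_{i∈S} v_i v_iᵀ invertible, and let w ∈ ℝ^d be a vector such that for every i ∈ S, (1 − v_iᵀA⁻¹v_i)·(1 + wᵀA⁻¹w) + (v_iᵀA⁻¹w)² ≤ 1. Then wᵀA⁻¹w ≤ d/(ℓ − d + 1). -/
import Mathlib


open Matrix

/-- If `|S| = ℓ ≥ d`, `A = ∑_{i∈S} vᵢvᵢᵀ` is invertible, and
`(1 − vᵢᵀA⁻¹vᵢ)(1 + wᵀA⁻¹w) + (vᵢᵀA⁻¹w)² ≤ 1` for all `i ∈ S`, then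
`wᵀA⁻¹w ≤ d/(ℓ − d + 1)`. -/
theorem local_opt_implies_small_leverage {d : ℕ} {ι : Type*} (S : Finset ι) (ℓ : ℕ)
    (hcard : S.card = ℓ) (hℓ : d ≤ ℓ) (v : ι → Fin d → ℝ)
    (hA : IsUnit (∑ i ∈ S, vecMulVec (v i) (v i)).det) (w : Fin d → ℝ)
    (hswap : ∀ i ∈ S,
      (1 - v i ⬝ᵥ ((∑ j ∈ S, vecMulVec (v j) (v j))⁻¹ *ᵥ v i)) *
        (1 + w ⬝ᵥ ((∑ j ∈ S, vecMulVec (v j) (v j))⁻¹ *ᵥ w)) +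
        (v i ⬝ᵥ ((∑ j ∈ S, vecMulVec (v j) (v j))⁻¹ *ᵥ w)) ^ 2 ≤ 1) :
    w ⬝ᵥ ((∑ j ∈ S, vecMulVec (v j) (v j))⁻¹ *ᵥ w) ≤ (d : ℝ) / ((ℓ : ℝ) - d + 1) := by
  set A : Matrix (Fin d) (Fin d) ℝ := ∑ j ∈ S, vecMulVec (v j) (v j) with hAdef
  have hABone : A * A⁻¹ = 1 := Matrix.mul_nonsing_inv A hA
  set B : Matrix (Fin d) (Fin d) ℝ := A⁻¹ with hBdef
  set u : Fin d → ℝ := B *ᵥ w with hu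
  set t : ℝ := w ⬝ᵥ u with ht
  -- Fact 1: sum of leverage scores equals d
  have h1 : ∀ i, v i ⬝ᵥ (B *ᵥ v i) = Matrix.trace (vecMulVec (v i) (v i) * B) := by
    intro i
    simp only [Matrix.trace, Matrix.diag, Matrix.mul_apply, Matrix.vecMulVec_apply,
      dotProduct, Matrix.mulVec, Finset.mul_sum]
    rw [Finset.sum_comm]
    congr 1; ext j; congr 1; ext k; ring
  have htrace : ∑ i ∈ S, v i ⬝ᵥ (B *ᵥ v i) = (d : ℝ) := by
    simp_rw [h1]
    rw [← Matrix.trace_sum, ← Finset.sum_mul, ← hAdef, hABone, Matrix.trace_one]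
    simp
  -- Fact 2: sum of squared cross terms equals t
  have h2 : ∀ i : ι, (v i ⬝ᵥ u) ^ 2 = u ⬝ᵥ (vecMulVec (v i) (v i) *ᵥ u) := by
    intro i
    simp only [dotProduct, Matrix.mulVec, Matrix.vecMulVec_apply, Finset.mul_sum, sq,
      Finset.sum_mul]
    rw [Finset.sum_comm]
    congr 1; ext j; congr 1; ext k; ring
  have hAu : A *ᵥ u = w := by
    rw [hu, Matrix.mulVec_mulVec, hABone, Matrix.one_mulVec]
  have hcross : ∑ i ∈ S, (v i ⬝ᵥ u) ^ 2 = t := by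
    simp_rw [h2]
    have : ∑ i ∈ S, u ⬝ᵥ (vecMulVec (v i) (v i) *ᵥ u)
        = u ⬝ᵥ (A *ᵥ u) := by
      rw [hAdef]
      have hmv : (∑ j ∈ S, vecMulVec (v j) (v j)) *ᵥ u
          = ∑ j ∈ S, vecMulVec (v j) (v j) *ᵥ u := by
        ext k
        simp only [Matrix.mulVec, dotProduct, Matrix.sum_apply, Finset.sum_apply,
          Finset.sum_mul]
        rw [Finset.sum_comm]
      rw [hmv]
      simp only [dotProduct, Finset.sum_apply, Finset.mul_sum]
      rw [Finset.sum_comm]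
    rw [this, hAu, ht, dotProduct_comm]
  -- Sum the hypothesis
  have hsum : ∑ i ∈ S, ((1 - v i ⬝ᵥ (B *ᵥ v i)) * (1 + t) + (v i ⬝ᵥ u) ^ 2)
      ≤ (ℓ : ℝ) := by
    calc ∑ i ∈ S, ((1 - v i ⬝ᵥ (B *ᵥ v i)) * (1 + t) + (v i ⬝ᵥ u) ^ 2)
        ≤ ∑ i ∈ S, (1 : ℝ) := Finset.sum_le_sum (fun i hi => hswap i hi)
      _ = (ℓ : ℝ) := by rw [Finset.sum_const, hcard]; simp
  have hexp : ∑ i ∈ S, ((1 - v i ⬝ᵥ (B *ᵥ v i)) * (1 + t) + (v i ⬝ᵥ u) ^ 2)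
      = ((ℓ : ℝ) - d) * (1 + t) + t := by
    rw [Finset.sum_add_distrib, hcross, ← Finset.sum_mul, Finset.sum_sub_distrib,
      htrace, Finset.sum_const, hcard]
    simp
  rw [hexp] at hsum
  have hpos : (0 : ℝ) < (ℓ : ℝ) - d + 1 := by
    have : (d : ℝ) ≤ (ℓ : ℝ) := by exact_mod_cast hℓ
    linarith
  rw [le_div_iff₀ hpos]
  nlinarith [hsum]
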